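/- arXiv:2304.10359 — 2 statements merged into one kernel-verified Lean document; each statement's English description precedes it below -/
import Mathlib

section
/- Let s, T, V be real polynomials in x = (x₁, …, x_n), let A be a real polynomial in (x, a) with a = (a₁, …, a_m), and let f₁, …, f_n be real polynomials in (x, a). Suppose there exist sum-of-squares polynomials λ₁, λ₂ in x, a real polynomial λ₃ in (x, a), a sum-of-squares polynomial λ₄ in (x, a), and a real number ε > 0 such that: (i) s − λ₁·(1 − V) is SOS; (ii) (1 − V) − λ₂·T is SOS; (iii) −Σ_{i=1}^n (∂V/∂x_i)·f_i − ε − λ₃·(V − 1) − λ₄·A is SOS. Then for every differentiable trajectory x : [0,∞) → ℝⁿ and every signal a : [0,∞) → ℝᵐ satisfying ẋ(t) = f(x(t), a(t)) and A(x(t), a(t)) ≥ 0 for all t ≥ 0, if T(x(0)) ≥ 0 then s(x(t)) ≥ 0 for all t ≥ 0. In particular the reachable set of ẋ = f(x,a) from the initial set 𝒯 = {T ≥ 0} under the attack constraint is contained in the safe set 𝒮 = {s ≥ 0}. -/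
open MvPolynomial

/-- A real polynomial is a sum-of-squares (SOS) polynomial if it is a finite
sum of squares of polynomials. -/
def IsSOS {σ : Type*} (p : MvPolynomial σ ℝ) : Prop :=
  ∃ (k : ℕ) (q : Fin k → MvPolynomial σ ℝ), p = ∑ j, (q j) ^ 2

lemma IsSOS.eval_nonneg {σ : Type*} {p : MvPolynomial σ ℝ} (h : IsSOS p) (y : σ → ℝ) :
    0 ≤ eval y p := by
  obtain ⟨k, q, rfl⟩ := h
  simp only [map_sum, map_pow]
  exact Finset.sum_nonneg fun j _ => sq_nonneg _

/-- Chain rule for evaluation of a multivariate polynomial along a trajectory. -/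
lemma hasDerivAt_eval_poly {n : ℕ} {x : ℝ → Fin n → ℝ} {x' : Fin n → ℝ} {t : ℝ}
    (hx : ∀ i, HasDerivAt (fun u => x u i) (x' i) t) (p : MvPolynomial (Fin n) ℝ) :
    HasDerivAt (fun u => eval (x u) p) (∑ i, eval (x t) (pderiv i p) * x' i) t := by
  induction p using MvPolynomial.induction_on with
  | C r =>
      simpa [pderiv_C] using (hasDerivAt_const t (r : ℝ))
  | add p q hp hq =>
      have := hp.add hq
      simpa [Finset.sum_add_distrib, add_mul, Pi.add_def] using this
  | mul_X p j hp =>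
      have h1 : HasDerivAt (fun u => eval (x u) p * x u j)
          ((∑ i, eval (x t) (pderiv i p) * x' i) * x t j + eval (x t) p * x' j) t :=
        hp.mul (hx j)
      have h2 : (∑ i, eval (x t) (pderiv i (p * X j)) * x' i)
          = (∑ i, eval (x t) (pderiv i p) * x' i) * x t j + eval (x t) p * x' j := by
        simp only [pderiv_mul, pderiv_X, eval_add, eval_mul, eval_X, Pi.single_apply,
          apply_ite (eval (x t)), map_one, map_zero, mul_ite, mul_one, mul_zero,
          ite_mul, zero_mul, add_mul]
        rw [Finset.sum_add_distrib, Finset.sum_mul, Finset.sum_ite_eq]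
        simp only [Finset.mem_univ, if_true]
        congr 1
        exact Finset.sum_congr rfl fun i _ => by ring
      rw [h2]
      simpa using h1

/-- If `g 0 ≤ 1` and `g' ≤ -ε < 0` whenever `g = 1`, then `g` stays `≤ 1` on `[0, ∞)`. -/
lemma stay_le_one (g g' : ℝ → ℝ) (ε : ℝ) (hε : 0 < ε)
    (hg : ∀ t, 0 ≤ t → HasDerivAt g (g' t) t)
    (h0 : g 0 ≤ 1)
    (hbd : ∀ t, 0 ≤ t → g t = 1 → g' t ≤ -ε) :
    ∀ t, 0 ≤ t → g t ≤ 1 := by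
  intro t0 ht0
  by_contra hgt
  push_neg at hgt
  have hcont : ContinuousOn g (Set.Icc 0 t0) := fun u hu =>
    ((hg u hu.1).continuousAt).continuousWithinAt
  set S : Set ℝ := Set.Icc 0 t0 ∩ g ⁻¹' Set.Iic 1 with hS
  have hScl : IsClosed S := hcont.preimage_isClosed_of_isClosed isClosed_Icc isClosed_Iic
  have hne : S.Nonempty := ⟨0, ⟨le_refl 0, ht0⟩, h0⟩
  have hbdd : BddAbove S := ⟨t0, fun u hu => hu.1.2⟩
  obtain ⟨τ, hτdef⟩ : ∃ τ, τ = sSup S := ⟨_, rfl⟩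
  have hτS : τ ∈ S := hτdef ▸ hScl.csSup_mem hne hbdd
  have hτ0 : 0 ≤ τ := hτS.1.1
  have hτt0 : τ ≤ t0 := hτS.1.2
  have hgτ : g τ ≤ 1 := hτS.2
  have hτlt : τ < t0 := lt_of_le_of_ne hτt0 (by rintro rfl; exact absurd hgτ (not_le.mpr hgt))
  have hev : ∀ᶠ u in nhdsWithin τ (Set.Ioi τ), g u ≤ 1 := by
    rcases lt_or_eq_of_le hgτ with hlt | heq
    · have hc : Filter.Tendsto g (nhds τ) (nhds (g τ)) := (hg τ hτ0).continuousAt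
      have : ∀ᶠ u in nhds τ, g u < 1 := hc.eventually_lt_const hlt
      exact (this.filter_mono nhdsWithin_le_nhds).mono fun u hu => le_of_lt hu
    · have hs := hasDerivAt_iff_tendsto_slope.mp (hg τ hτ0)
      have hg'neg : g' τ < 0 := lt_of_le_of_lt (hbd τ hτ0 heq) (by linarith)
      have hneg : ∀ᶠ u in nhdsWithin τ {τ}ᶜ, slope g τ u < 0 :=
        hs.eventually_lt_const hg'neg
      have hmono : nhdsWithin τ (Set.Ioi τ) ≤ nhdsWithin τ {τ}ᶜ :=
        nhdsWithin_mono τ (fun u hu => Set.mem_compl_singleton_iff.mpr (ne_of_gt hu))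
      filter_upwards [hneg.filter_mono hmono, self_mem_nhdsWithin] with u hu hu'
      have hupos : (0 : ℝ) < u - τ := sub_pos.mpr hu'
      rw [slope_def_field] at hu
      have : g u - g τ < 0 := by
        by_contra hge
        push_neg at hge
        exact absurd hu (not_lt.mpr (div_nonneg hge (le_of_lt hupos)))
      linarith [heq]
  have hlt' : ∀ᶠ u in nhdsWithin τ (Set.Ioi τ), u < t0 :=
    Filter.eventually_iff_exists_mem.mpr ⟨Set.Ioo τ t0,
      Ioo_mem_nhdsGT_of_mem ⟨le_refl τ, hτlt⟩, fun u hu => hu.2⟩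
  have hin : ∀ᶠ u in nhdsWithin τ (Set.Ioi τ), u ∈ Set.Ioi τ := self_mem_nhdsWithin
  obtain ⟨u, ⟨hu1, hu2⟩, hu3⟩ := ((hev.and hlt').and hin).exists
  have huS : u ∈ S := ⟨⟨le_of_lt (lt_of_le_of_lt hτ0 hu3), le_of_lt hu2⟩, hu1⟩
  have : u ≤ τ := by rw [hτdef]; exact le_csSup hbdd huS
  exact absurd this (not_le.mpr hu3)

/-- Theorem 1 of the paper (with the slack margin `ε > 0` of condition (16)):
the three SOS conditions imply that every trajectory of `ẋ = f(x,a)` starting in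
the initial set `{T ≥ 0}`, under the attack constraint `A(x,a) ≥ 0`, remains in
the safe set `{s ≥ 0}` for all `t ≥ 0`. -/
theorem safety_primary {n m : ℕ}
    (s T V : MvPolynomial (Fin n) ℝ)
    (A : MvPolynomial (Fin n ⊕ Fin m) ℝ)
    (f : Fin n → MvPolynomial (Fin n ⊕ Fin m) ℝ)
    (lam1 lam2 : MvPolynomial (Fin n) ℝ)
    (lam3 lam4 : MvPolynomial (Fin n ⊕ Fin m) ℝ)
    (ε : ℝ) (hε : 0 < ε)
    (hlam1 : IsSOS lam1) (hlam2 : IsSOS lam2) (hlam4 : IsSOS lam4)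
    (c1 : IsSOS (s - lam1 * (1 - V)))
    (c2 : IsSOS ((1 - V) - lam2 * T))
    (c3 : IsSOS (-(∑ i, (rename Sum.inl (pderiv i V)) * f i) - C ε
        - lam3 * ((rename Sum.inl V) - 1) - lam4 * A)) :
    ∀ (x : ℝ → Fin n → ℝ) (a : ℝ → Fin m → ℝ),
      (∀ t : ℝ, 0 ≤ t →
        HasDerivAt x (fun i => eval (Sum.elim (x t) (a t)) (f i)) t) →
      (∀ t : ℝ, 0 ≤ t → 0 ≤ eval (Sum.elim (x t) (a t)) A) →
      0 ≤ eval (x 0) T → ∀ t : ℝ, 0 ≤ t → 0 ≤ eval (x t) s := by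
  intro x a hx hA hT0 t ht
  -- the barrier value along the trajectory
  set g : ℝ → ℝ := fun u => eval (x u) V with hgdef
  set g' : ℝ → ℝ := fun u =>
    ∑ i, eval (x u) (pderiv i V) * eval (Sum.elim (x u) (a u)) (f i) with hg'def
  have hg : ∀ u, 0 ≤ u → HasDerivAt g (g' u) u := fun u hu =>
    hasDerivAt_eval_poly (fun i => hasDerivAt_pi.mp (hx u hu) i) V
  -- initial condition : g 0 ≤ 1, from c2
  have h0 : g 0 ≤ 1 := by
    have h2 := c2.eval_nonneg (x 0)
    have hl2 := hlam2.eval_nonneg (x 0)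
    simp only [eval_sub, map_one, eval_mul] at h2
    nlinarith [mul_nonneg hl2 hT0]
  -- decrease condition at the boundary, from c3
  have hbd : ∀ u, 0 ≤ u → g u = 1 → g' u ≤ -ε := by
    intro u hu hgu
    have h3 := c3.eval_nonneg (Sum.elim (x u) (a u))
    have hl4 := hlam4.eval_nonneg (Sum.elim (x u) (a u))
    have hAu := hA u hu
    simp only [eval_sub, eval_neg, eval_mul, eval_C, map_one, map_sum,
      eval_rename, Sum.elim_comp_inl] at h3
    rw [show (eval (x u)) V = g u from rfl, hgu] at h3
    simp only [sub_self, mul_zero, sub_zero] at h3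
    have : (0:ℝ) ≤ eval (Sum.elim (x u) (a u)) lam4 * eval (Sum.elim (x u) (a u)) A :=
      mul_nonneg hl4 hAu
    simp only [hg'def]
    nlinarith [h3, this]
  have hginv : g t ≤ 1 := stay_le_one g g' ε hε hg h0 hbd t ht
  -- safety from c1
  have h1 := c1.eval_nonneg (x t)
  have hl1 := hlam1.eval_nonneg (x t)
  simp only [eval_sub, map_one, eval_mul] at h1
  have : (0:ℝ) ≤ eval (x t) lam1 * (1 - eval (x t) V) :=
    mul_nonneg hl1 (by simpa [hgdef] using sub_nonneg.mpr hginv)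
  linarith
end

section
/- Let f : ℝⁿ × ℝᵐ → ℝⁿ, A : ℝⁿ × ℝᵐ → ℝ, s, T : ℝⁿ → ℝ, and let V : ℝⁿ → ℝ be continuously differentiable. Suppose: (i) {x | T(x) ≥ 0} ⊆ {x | V(x) ≤ 1}; (ii) {x | V(x) ≤ 1} ⊆ {x | s(x) ≥ 0}; (iii) for every x with V(x) = 1 and every a with A(x,a) ≥ 0, ∇V(x) · f(x,a) < 0. Then for every differentiable trajectory x : [0,∞) → ℝⁿ and every signal a : [0,∞) → ℝᵐ with ẋ(t) = f(x(t), a(t)) and A(x(t), a(t)) ≥ 0 for all t ≥ 0, if T(x(0)) ≥ 0 then s(x(t)) ≥ 0 for all t ≥ 0. -/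
/-- Analytic core of Theorem 1: the sandwich `{T ≥ 0} ⊆ {V ≤ 1} ⊆ {s ≥ 0}` together
with strict decrease of `V` along `f(·,a)` on the boundary `{V = 1}` (for admissible
attacks `A(x,a) ≥ 0`) implies that trajectories starting in `{T ≥ 0}` stay
in `{s ≥ 0}` for all `t ≥ 0`. -/
theorem safety_from_sandwich {n m : ℕ}
    (f : (Fin n → ℝ) → (Fin m → ℝ) → (Fin n → ℝ))
    (A : (Fin n → ℝ) → (Fin m → ℝ) → ℝ)
    (s T : (Fin n → ℝ) → ℝ)
    (V : (Fin n → ℝ) → ℝ) (hV : ContDiff ℝ 1 V)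
    (hTV : {x : Fin n → ℝ | 0 ≤ T x} ⊆ {x : Fin n → ℝ | V x ≤ 1})
    (hVs : {x : Fin n → ℝ | V x ≤ 1} ⊆ {x : Fin n → ℝ | 0 ≤ s x})
    (hdec : ∀ (x : Fin n → ℝ) (a : Fin m → ℝ),
      V x = 1 → 0 ≤ A x a → fderiv ℝ V x (f x a) < 0) :
    ∀ (x : ℝ → Fin n → ℝ) (a : ℝ → Fin m → ℝ),
      (∀ t : ℝ, 0 ≤ t → HasDerivAt x (f (x t) (a t)) t) →
      (∀ t : ℝ, 0 ≤ t → 0 ≤ A (x t) (a t)) →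
      0 ≤ T (x 0) → ∀ t : ℝ, 0 ≤ t → 0 ≤ s (x t) := by
  intro x a hx ha hT0 t ht
  apply hVs
  show V (x t) ≤ 1
  by_contra hVt
  push_neg at hVt
  have hV1 : V (x 0) ≤ 1 := hTV hT0
  set g : ℝ → ℝ := fun u => V (x u) with hgdef
  have hgd : ∀ u : ℝ, 0 ≤ u →
      HasDerivAt g (fderiv ℝ V (x u) (f (x u) (a u))) u := fun u hu =>
    ((hV.differentiable one_ne_zero) (x u)).hasFDerivAt.comp_hasDerivAt u (hx u hu)
  have hgc : ContinuousOn g (Set.Icc 0 t) := fun u hu =>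
    ((hgd u hu.1).continuousAt).continuousWithinAt
  set S := Set.Icc 0 t ∩ g ⁻¹' Set.Iic 1 with hS
  have hSne : S.Nonempty := ⟨0, ⟨le_rfl, ht⟩, hV1⟩
  have hSbdd : BddAbove S := ⟨t, fun u hu => hu.1.2⟩
  have hSclosed : IsClosed S :=
    hgc.preimage_isClosed_of_isClosed isClosed_Icc isClosed_Iic
  set t₀ := sSup S with ht₀def
  have ht₀S : t₀ ∈ S := hSclosed.csSup_mem hSne hSbdd
  obtain ⟨⟨ht₀0, ht₀t⟩, hgt₀⟩ := ht₀S
  have hgt₀' : g t₀ ≤ 1 := hgt₀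
  have ht₀lt : t₀ < t := by
    rcases lt_or_eq_of_le ht₀t with h | h
    · exact h
    · exfalso; rw [h] at hgt₀'; exact absurd hgt₀' (not_le.mpr hVt)
  have hafter : ∀ u, t₀ < u → u ≤ t → 1 < g u := by
    intro u hu1 hu2
    by_contra h; push_neg at h
    exact absurd (le_csSup hSbdd ⟨⟨ht₀0.trans hu1.le, hu2⟩, h⟩) (not_le.mpr hu1)
  have key : ∀ᶠ u in nhdsWithin t₀ (Set.Ioi t₀), g u < 1 := by
    rcases lt_or_eq_of_le hgt₀' with hlt | heq
    · have hcont := (hgd t₀ ht₀0).continuousAt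
      have h1 : ∀ᶠ u in nhds t₀, g u < 1 := hcont.eventually_lt_const hlt
      exact h1.filter_mono nhdsWithin_le_nhds
    · -- g t₀ = 1, use strict decrease
      have hd : fderiv ℝ V (x t₀) (f (x t₀) (a t₀)) < 0 :=
        hdec (x t₀) (a t₀) heq (ha t₀ ht₀0)
      have hslope : Filter.Tendsto (slope g t₀) (nhdsWithin t₀ {t₀}ᶜ)
          (nhds (fderiv ℝ V (x t₀) (f (x t₀) (a t₀)))) :=
        hasDerivAt_iff_tendsto_slope.mp (hgd t₀ ht₀0)
      have hslope' : Filter.Tendsto (slope g t₀) (nhdsWithin t₀ (Set.Ioi t₀))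
          (nhds (fderiv ℝ V (x t₀) (f (x t₀) (a t₀)))) :=
        hslope.mono_left (nhdsWithin_mono _ (fun u hu => ne_of_gt hu))
      have hneg : ∀ᶠ u in nhdsWithin t₀ (Set.Ioi t₀), slope g t₀ u < 0 :=
        hslope'.eventually_lt_const hd
      filter_upwards [hneg, self_mem_nhdsWithin] with u hu hu'
      have hu0 : (0:ℝ) < u - t₀ := sub_pos.mpr hu'
      have : (g u - g t₀) / (u - t₀) < 0 := by
        rw [slope_def_field] at hu
        simpa [div_eq_iff] using hu
      have := (div_neg_iff.mp this)
      rcases this with ⟨h1, h2⟩ | ⟨h1, h2⟩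
      · linarith
      · have : g u < g t₀ := by linarith
        rw [heq] at this; exact this
  have hmem : Set.Ioo t₀ t ∈ nhdsWithin t₀ (Set.Ioi t₀) :=
    Ioo_mem_nhdsGT_of_mem ⟨le_rfl, ht₀lt⟩
  obtain ⟨u, hu1, hu2⟩ := (key.and (Filter.eventually_of_mem hmem (fun _ h => h))).exists
  exact absurd (hafter u hu2.1 hu2.2.le) (not_lt.mpr hu1.le)
end
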